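/- Let H and B be symmetric positive definite real n×n matrices, Σ a positive semidefinite real n×n matrix, θ₀, θ* ∈ ℝⁿ, and α > 0 with 2α·λ₁ < 1, where λ₁ ≥ ... ≥ λ_n denote the eigenvalues of H^{1/2}B⁻¹H^{1/2}. Set h(θ) = ½(θ−θ*)ᵀH(θ−θ*), Δ₀ = θ₀ − θ*, let Φ(X) = X − α(B⁻¹HX + (B⁻¹HX)ᵀ), let V_∞ be a matrix satisfying B⁻¹HV_∞ + V_∞HB⁻¹ = αB⁻¹ΣB⁻¹, and for k ≥ 0 define V_k = V_∞ − Φ^k(V_∞) + Φ^k(Δ₀Δ₀ᵀ) and m_k = θ* + (I − αB⁻¹H)^k Δ₀. Then, with ε₁ = αλ₁ and ε₂ = αλ_n, L(k) ≤ ½tr(H V_k) + ½tr(H (m_k−θ*)(m_k−θ*)ᵀ) ≤ U(k), where U(k) = [1−(1−2ε₁)^k]·(α/4)tr(B⁻¹Σ) + (1−2ε₂)^k h(θ₀) + (1−ε₂)^{2k} h(θ₀) and L(k) = [1−(1−2ε₂)^k]·(α/4)tr(B⁻¹Σ) + (1−2ε₁)^k h(θ₀) + (1−ε₁)^{2k}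 h(θ₀). -/

import Mathlib

open Matrix

private lemma mul_vecMulVec' {n : ℕ} (u v : Fin n → ℝ) (A : Matrix (Fin n) (Fin n) ℝ) :
    A * vecMulVec u v = vecMulVec (A *ᵥ u) v := by
  ext i j
  simp only [mul_apply, vecMulVec_apply, mulVec, dotProduct, Finset.sum_mul]
  exact Finset.sum_congr rfl fun x _ => by ring

private lemma vecMulVec_mul' {n : ℕ} (u v : Fin n → ℝ) (A : Matrix (Fin n) (Fin n) ℝ) :
    vecMulVec u v * A = vecMulVec u (v ᵥ* A) := by
  ext i j
  simp only [mul_apply, vecMulVec_apply, vecMul, dotProduct, Finset.mul_sum]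
  exact Finset.sum_congr rfl fun x _ => by ring

private lemma trace_mul_vecMulVec' {n : ℕ} (u v : Fin n → ℝ) (A : Matrix (Fin n) (Fin n) ℝ) :
    (A * vecMulVec u v).trace = v ⬝ᵥ (A *ᵥ u) := by
  simp only [trace, diag_apply, mul_apply, vecMulVec_apply, dotProduct, mulVec,
    Finset.mul_sum]
  exact Finset.sum_congr rfl fun i _ => Finset.sum_congr rfl fun j _ => by ring

set_option maxHeartbeats 4000000 in
theorem expected_objective_bounds_const_lr {n : ℕ} (hn : 0 < n)
    (H B Sg Vinf : Matrix (Fin n) (Fin n) ℝ)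
    (θ0 θs : Fin n → ℝ) (α : ℝ) (hα : 0 < α)
    (hH : H.PosDef) (hB : B.PosDef) (hSg : Sg.PosSemidef)
    (hSym : (((hH.posSemidef.1.eigenvectorUnitary : Matrix (Fin n) (Fin n) ℝ) * diagonal (fun i => (hH.posSemidef.1.eigenvalues i).sqrt) * (star hH.posSemidef.1.eigenvectorUnitary : Matrix (Fin n) (Fin n) ℝ)) * B⁻¹ * ((hH.posSemidef.1.eigenvectorUnitary : Matrix (Fin n) (Fin n) ℝ) * diagonal (fun i => (hH.posSemidef.1.eigenvalues i).sqrt) * (star hH.posSemidef.1.eigenvectorUnitary : Matrix (Fin n) (Fin n) ℝ))).IsHermitian)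
    (hlr : 2 * α * (⨆ i, hSym.eigenvalues i) < 1)
    (hV : B⁻¹ * H * Vinf + Vinf * H * B⁻¹ = α • (B⁻¹ * Sg * B⁻¹))
    (k : ℕ) :
    let Δ0 : Fin n → ℝ := θ0 - θs
    let Φ : Matrix (Fin n) (Fin n) ℝ → Matrix (Fin n) (Fin n) ℝ :=
      fun X => X - α • (B⁻¹ * H * X + (B⁻¹ * H * X)ᵀ)
    let Vk : Matrix (Fin n) (Fin n) ℝ :=
      Vinf - Φ^[k] Vinf + Φ^[k] (Matrix.vecMulVec Δ0 Δ0)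
    let mk : Fin n → ℝ := θs + ((1 - α • (B⁻¹ * H)) ^ k).mulVec Δ0
    let h0 : ℝ := (1 / 2) * (Δ0 ⬝ᵥ H.mulVec Δ0)
    let ε1 : ℝ := α * (⨆ i, hSym.eigenvalues i)
    let ε2 : ℝ := α * (⨅ i, hSym.eigenvalues i)
    let E : ℝ := (1 / 2) * (H * Vk).trace +
      (1 / 2) * (H * Matrix.vecMulVec (mk - θs) (mk - θs)).trace
    ((1 - (1 - 2 * ε2) ^ k) * (α / 4) * (B⁻¹ * Sg).trace
        + (1 - 2 * ε1) ^ k * h0 + (1 - ε1) ^ (2 * k) * h0 ≤ E)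
    ∧ (E ≤ (1 - (1 - 2 * ε1) ^ k) * (α / 4) * (B⁻¹ * Sg).trace
        + (1 - 2 * ε2) ^ k * h0 + (1 - ε2) ^ (2 * k) * h0) := by
  classical
  intro Δ0 Φ Vk mk h0 ε1 ε2 E
  -- ## Setup: square root S of H
  set S : Matrix (Fin n) (Fin n) ℝ := ((hH.posSemidef.1.eigenvectorUnitary : Matrix (Fin n) (Fin n) ℝ) * diagonal (fun i => (hH.posSemidef.1.eigenvalues i).sqrt) * (star hH.posSemidef.1.eigenvectorUnitary : Matrix (Fin n) (Fin n) ℝ)) with hSdef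
  have hSS : S * S = H := by
    have hUH : (star hH.posSemidef.1.eigenvectorUnitary : Matrix (Fin n) (Fin n) ℝ) *
        (hH.posSemidef.1.eigenvectorUnitary : Matrix (Fin n) (Fin n) ℝ) = 1 :=
      Unitary.coe_star_mul_self _
    have hd : diagonal (fun i => (hH.posSemidef.1.eigenvalues i).sqrt) *
        diagonal (fun i => (hH.posSemidef.1.eigenvalues i).sqrt)
        = diagonal (RCLike.ofReal ∘ hH.posSemidef.1.eigenvalues) := by
      rw [diagonal_mul_diagonal]
      congr 1; funext i
      simp [Real.mul_self_sqrt (hH.posSemidef.eigenvalues_nonneg i)]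
    conv_rhs => rw [hH.posSemidef.1.spectral_theorem, Unitary.conjStarAlgAut_apply]
    rw [hSdef, ← hd]
    simp only [Matrix.mul_assoc]
    rw [← Matrix.mul_assoc (star _ : Matrix (Fin n) (Fin n) ℝ), hUH, Matrix.one_mul]
  have hSps : S.PosSemidef := by
    rw [hSdef, Matrix.star_eq_conjTranspose]
    exact (PosSemidef.diagonal (fun i => Real.sqrt_nonneg _)).mul_mul_conjTranspose_same _
  have hSsym : Sᵀ = S := by
    have h := hSps.isHermitian
    rwa [Matrix.IsHermitian, conjTranspose_eq_transpose_of_trivial] at h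
  have hSherm : Sᴴ = S := hSps.isHermitian
  have hHsym : Hᵀ = H := by
    have h := hH.isHermitian
    rwa [Matrix.IsHermitian, conjTranspose_eq_transpose_of_trivial] at h
  have hBinvsym : (B⁻¹)ᵀ = B⁻¹ := by
    have h := hB.inv.isHermitian
    rwa [Matrix.IsHermitian, conjTranspose_eq_transpose_of_trivial] at h
  have hBinvherm : (B⁻¹)ᴴ = B⁻¹ := hB.inv.isHermitian
  have hBdet : IsUnit B.det := hB.det_pos.ne'.isUnit
  have hBBinv : B * B⁻¹ = 1 := Matrix.mul_nonsing_inv B hBdet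
  have hBinvB : B⁻¹ * B = 1 := Matrix.nonsing_inv_mul B hBdet
  have hSdet : IsUnit S.det := by
    have h : S.det * S.det = H.det := by rw [← Matrix.det_mul, hSS]
    have h2 : S.det ≠ 0 := by
      intro h0'; rw [h0', mul_zero] at h; exact hH.det_pos.ne' h.symm
    exact h2.isUnit
  -- ## M = S B⁻¹ S is positive definite
  have hMpd : (S * B⁻¹ * S).PosDef := by
    refine PosDef.of_dotProduct_mulVec_pos hSym fun x hx => ?_
    have hxS : S *ᵥ x ≠ 0 := fun h0 => hx <| by
      have h1 := Matrix.mulVec_injective_iff_isUnit.2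
        ((Matrix.isUnit_iff_isUnit_det S).2 hSdet) (a₁ := x) (a₂ := 0) (by simpa using h0)
      simpa using h1
    have hpos := hB.inv.dotProduct_mulVec_pos hxS
    have hvm : x ᵥ* S = S *ᵥ x := by rw [← Matrix.vecMul_transpose S x, hSsym]
    have key : x ⬝ᵥ (S * B⁻¹ * S) *ᵥ x = (S *ᵥ x) ⬝ᵥ B⁻¹ *ᵥ (S *ᵥ x) := by
      rw [← Matrix.mulVec_mulVec, ← Matrix.mulVec_mulVec, Matrix.dotProduct_mulVec, hvm]
    rw [star_trivial] at hpos ⊢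
    rw [key]; exact hpos
  set lam : Fin n → ℝ := hSym.eigenvalues with hlamdef
  have hlampos : ∀ i, 0 < lam i := fun i => hMpd.eigenvalues_pos i
  -- ## eigenvector unitary
  set U : Matrix (Fin n) (Fin n) ℝ := (hSym.eigenvectorUnitary : Matrix (Fin n) (Fin n) ℝ)
    with hUdef
  have hUU : star U * U = 1 := (Unitary.mem_iff.mp hSym.eigenvectorUnitary.2).1
  have hUU' : U * star U = 1 := (Unitary.mem_iff.mp hSym.eigenvectorUnitary.2).2
  have hUt : star U = Uᵀ := by
    rw [Matrix.star_eq_conjTranspose, conjTranspose_eq_transpose_of_trivial]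
  set D : Matrix (Fin n) (Fin n) ℝ := Matrix.diagonal lam with hDdef
  have hspec : star U * (S * B⁻¹ * S) * U = D := by
    have h := hSym.conjStarAlgAut_star_eigenvectorUnitary
    rw [Unitary.conjStarAlgAut_star_apply] at h
    rwa [RCLike.ofReal_real_eq_id, Function.id_comp] at h
  have hcan : ∀ X : Matrix (Fin n) (Fin n) ℝ, U * (star U * X) = X := fun X => by
    rw [← Matrix.mul_assoc, hUU', Matrix.one_mul]
  have hcan' : ∀ X : Matrix (Fin n) (Fin n) ℝ, star U * (U * X) = X := fun X => by
    rw [← Matrix.mul_assoc, hUU, Matrix.one_mul]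
  -- ## the conjugation map T
  set T : Matrix (Fin n) (Fin n) ℝ → Matrix (Fin n) (Fin n) ℝ :=
    fun X => star U * (S * X * S) * U with hTdef
  have hmulT : ∀ A C : Matrix (Fin n) (Fin n) ℝ,
      star U * (A * C) * U = (star U * A * U) * (star U * C * U) := by
    intro A C; simp only [Matrix.mul_assoc, hcan]
  -- trace identity
  have hT_trace : ∀ X : Matrix (Fin n) (Fin n) ℝ, (H * X).trace = (T X).trace := by
    intro X
    have e3 : (T X).trace = (S * X * S).trace := by
      simp only [hTdef]
      rw [Matrix.trace_mul_cycle, hUU', Matrix.one_mul]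
    rw [e3, Matrix.trace_mul_cycle S X S, hSS]
  -- c1, c2 : conjugation of the two pieces of Φ
  have c1 : ∀ Y : Matrix (Fin n) (Fin n) ℝ,
      star U * (S * (B⁻¹ * H * Y) * S) * U = D * T Y := by
    intro Y
    have e : S * (B⁻¹ * H * Y) * S = (S * B⁻¹ * S) * (S * Y * S) := by
      rw [← hSS]; simp only [Matrix.mul_assoc]
    rw [e, hmulT, hspec]
  have hDt : Dᵀ = D := by rw [hDdef, Matrix.diagonal_transpose]
  have c2 : ∀ Y : Matrix (Fin n) (Fin n) ℝ,
      star U * (S * (B⁻¹ * H * Y)ᵀ * S) * U = (T Y)ᵀ * D := by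
    intro Y
    have e2' : S * (B⁻¹ * H * Y)ᵀ * S = (S * (B⁻¹ * H * Y) * S)ᵀ := by
      simp only [Matrix.transpose_mul, hSsym, hHsym, hBinvsym, Matrix.mul_assoc]
    have e4 : star U * (S * (B⁻¹ * H * Y) * S)ᵀ * U
        = (star U * (S * (B⁻¹ * H * Y) * S) * U)ᵀ := by
      simp only [Matrix.transpose_mul, hUt, Matrix.transpose_transpose, Matrix.mul_assoc]
    rw [e2', e4, c1, Matrix.transpose_mul, hDt]
  -- diagonal action of Φ under T
  have hstepdiag : ∀ (Y : Matrix (Fin n) (Fin n) ℝ) (i : Fin n),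
      T (Φ Y) i i = (1 - 2 * α * lam i) * T Y i i := by
    intro Y i
    have hPhi : Φ Y = Y - α • (B⁻¹ * H * Y + (B⁻¹ * H * Y)ᵀ) := rfl
    have expand : T (Φ Y) = T Y - α • (D * T Y + (T Y)ᵀ * D) := by
      simp only [hTdef, hPhi, Matrix.mul_sub, Matrix.sub_mul, Matrix.mul_add, Matrix.add_mul,
        Matrix.mul_smul, Matrix.smul_mul, smul_add, c1, c2]
    rw [expand]
    simp only [Matrix.sub_apply, Matrix.smul_apply, Matrix.add_apply, hDdef,
      Matrix.diagonal_mul, Matrix.mul_diagonal, Matrix.transpose_apply, smul_eq_mul]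
    ring
  have hiter : ∀ (m : ℕ) (X : Matrix (Fin n) (Fin n) ℝ) (i : Fin n),
      T (Φ^[m] X) i i = (1 - 2 * α * lam i) ^ m * T X i i := by
    intro m
    induction m with
    | zero => intro X i; simp
    | succ m ih =>
      intro X i
      rw [Function.iterate_succ_apply', hstepdiag, ih, pow_succ]
      ring
  -- ## Z = T Vinf : Lyapunov equation in eigencoordinates
  set Z : Matrix (Fin n) (Fin n) ℝ := T Vinf with hZdef
  set R : Matrix (Fin n) (Fin n) ℝ := star U * (S * (B⁻¹ * Sg * B⁻¹) * S) * U with hRdef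
  have hDZ : D * Z + Z * D = α • R := by
    have h := congrArg (fun X => star U * (S * X * S) * U) hV
    simp only [Matrix.mul_add, Matrix.add_mul, Matrix.mul_smul, Matrix.smul_mul] at h
    have e5 : star U * (S * (Vinf * H * B⁻¹) * S) * U = Z * D := by
      have e : S * (Vinf * H * B⁻¹) * S = (S * Vinf * S) * (S * B⁻¹ * S) := by
        rw [← hSS]; simp only [Matrix.mul_assoc]
      rw [e, hmulT, hspec, hZdef, hTdef]
    rw [c1, e5] at h
    rw [hZdef]
    exact h
  have hRpsd : R.PosSemidef := by
    have e : R = (B⁻¹ * (S * U))ᴴ * Sg * (B⁻¹ * (S * U)) := by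
      rw [hRdef, Matrix.conjTranspose_mul, Matrix.conjTranspose_mul, hSherm, hBinvherm,
        ← Matrix.star_eq_conjTranspose]
      simp only [Matrix.mul_assoc]
    rw [e]
    exact hSg.conjTranspose_mul_mul_same _
  have hRdiag : ∀ i, 0 ≤ R i i := by
    intro i
    have h := hRpsd.dotProduct_mulVec_nonneg (Pi.single i 1)
    simpa [Matrix.mulVec_single, dotProduct, Pi.single_apply] using h
  have hZdiag : ∀ i, 0 ≤ Z i i := by
    intro i
    have h1 : (D * Z + Z * D) i i = (α • R) i i := by rw [hDZ]
    simp only [Matrix.add_apply, hDdef, Matrix.diagonal_mul, Matrix.mul_diagonal,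
      Matrix.smul_apply, smul_eq_mul] at h1
    have h2 : 0 ≤ α * R i i := mul_nonneg hα.le (hRdiag i)
    nlinarith [hlampos i]
  -- ## trace of H * Vinf
  have htrHV : (H * Vinf).trace + (H * Vinf).trace = α * (B⁻¹ * Sg).trace := by
    have h := congrArg (fun X => (B * X).trace) hV
    simp only [Matrix.mul_add, Matrix.trace_add, Matrix.mul_smul, Matrix.trace_smul,
      smul_eq_mul] at h
    have e1 : B * (B⁻¹ * H * Vinf) = H * Vinf := by
      rw [← Matrix.mul_assoc, ← Matrix.mul_assoc, hBBinv, Matrix.one_mul]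
    have e2 : (B * (Vinf * H * B⁻¹)).trace = (H * Vinf).trace := by
      have : B * (Vinf * H * B⁻¹) = B * (Vinf * H) * B⁻¹ := by
        simp only [Matrix.mul_assoc]
      rw [this, Matrix.trace_mul_cycle, ← Matrix.mul_assoc, hBinvB, Matrix.one_mul,
        Matrix.trace_mul_comm]
    have e3 : B * (B⁻¹ * Sg * B⁻¹) = Sg * B⁻¹ := by
      rw [← Matrix.mul_assoc, ← Matrix.mul_assoc, hBBinv, Matrix.one_mul]
    rw [e1, e2, e3, Matrix.trace_mul_comm Sg B⁻¹] at h
    exact h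
  have htrZ : ∑ i, Z i i = (H * Vinf).trace := by
    rw [hT_trace Vinf, ← hZdef]
    simp [Matrix.trace, Matrix.diag]
  -- ## the vector w
  set w : Fin n → ℝ := (star U * S) *ᵥ Δ0 with hwdef
  have hvmS : ∀ x : Fin n → ℝ, x ᵥ* S = S *ᵥ x := by
    intro x
    conv_lhs => rw [← hSsym]
    exact Matrix.vecMul_transpose S x
  have hnormU : ∀ y : Fin n → ℝ, (U *ᵥ y) ⬝ᵥ (U *ᵥ y) = y ⬝ᵥ y := by
    intro y
    have e : (U *ᵥ y) ᵥ* U = y := by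
      rw [← Matrix.mulVec_transpose, Matrix.mulVec_mulVec, ← hUt, hUU, Matrix.one_mulVec]
    rw [Matrix.dotProduct_mulVec, e]
  have hnormU' : ∀ y : Fin n → ℝ, (star U *ᵥ y) ⬝ᵥ (star U *ᵥ y) = y ⬝ᵥ y := by
    intro y
    have e : (star U *ᵥ y) ᵥ* star U = y := by
      rw [← Matrix.mulVec_transpose, Matrix.mulVec_mulVec, hUt, Matrix.transpose_transpose,
        ← hUt, hUU', Matrix.one_mulVec]
    rw [Matrix.dotProduct_mulVec, e]
  have hw2 : Δ0 ⬝ᵥ H *ᵥ Δ0 = ∑ i, w i * w i := by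
    have e : Δ0 ⬝ᵥ H *ᵥ Δ0 = (S *ᵥ Δ0) ⬝ᵥ (S *ᵥ Δ0) := by
      rw [← hSS, ← Matrix.mulVec_mulVec, Matrix.dotProduct_mulVec, hvmS]
    have e2 : w ⬝ᵥ w = (S *ᵥ Δ0) ⬝ᵥ (S *ᵥ Δ0) := by
      rw [hwdef, ← Matrix.mulVec_mulVec]
      exact hnormU' (S *ᵥ Δ0)
    rw [e, ← e2]
    rfl
  have hSUt2 : (S * U)ᵀ = star U * S := by
    rw [Matrix.transpose_mul, hSsym, ← hUt]
  have hvmv : ∀ i, T (vecMulVec Δ0 Δ0) i i = w i * w i := by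
    intro i
    have e : T (vecMulVec Δ0 Δ0) = vecMulVec w w := by
      simp only [hTdef]
      rw [mul_vecMulVec', vecMulVec_mul', mul_vecMulVec', vecMulVec_mul',
        Matrix.mulVec_mulVec, Matrix.vecMul_vecMul]
      congr 1
      rw [← Matrix.mulVec_transpose (S * U) Δ0, hSUt2]
    rw [e, Matrix.vecMulVec_apply]
  -- ## mean term
  have hmkd : mk - θs = ((1 : Matrix (Fin n) (Fin n) ℝ) - α • (B⁻¹ * H)) ^ k *ᵥ Δ0 := by
    show θs + ((1 : Matrix (Fin n) (Fin n) ℝ) - α • (B⁻¹ * H)) ^ k *ᵥ Δ0 - θs = _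
    exact add_sub_cancel_left _ _
  have hSP : S * (1 - α • (B⁻¹ * H)) = (1 - α • (S * B⁻¹ * S)) * S := by
    rw [Matrix.mul_sub, Matrix.sub_mul, Matrix.mul_one, Matrix.one_mul, Matrix.mul_smul,
      Matrix.smul_mul]
    congr 2
    rw [← hSS]; simp only [Matrix.mul_assoc]
  have hSPk : ∀ m : ℕ, S * (1 - α • (B⁻¹ * H)) ^ m = (1 - α • (S * B⁻¹ * S)) ^ m * S := by
    intro m; induction m with
    | zero => simp
    | succ m ih =>
      rw [pow_succ, pow_succ, ← Matrix.mul_assoc, ih, Matrix.mul_assoc, hSP, ← Matrix.mul_assoc]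
  have hMspec : S * B⁻¹ * S = U * D * star U := by
    rw [← hspec]
    simp only [Matrix.mul_assoc, hcan]
    rw [hUU', Matrix.mul_one]
  have hQdiag : (1 : Matrix (Fin n) (Fin n) ℝ) - α • (S * B⁻¹ * S)
      = U * Matrix.diagonal (fun i => 1 - α * lam i) * star U := by
    have e1 : (Matrix.diagonal (fun i => 1 - α * lam i) : Matrix (Fin n) (Fin n) ℝ)
        = 1 - α • D := by
      ext i j
      by_cases h : i = j
      · subst h
        simp [hDdef, Matrix.one_apply_eq]
      · simp [hDdef, Matrix.one_apply_ne h, Matrix.diagonal_apply_ne _ h]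
    rw [e1, Matrix.mul_sub, Matrix.sub_mul, Matrix.mul_one, Matrix.mul_smul, Matrix.smul_mul,
      hUU', ← hMspec]
  have hQpow : ∀ m : ℕ, ((1 : Matrix (Fin n) (Fin n) ℝ) - α • (S * B⁻¹ * S)) ^ m
      = U * Matrix.diagonal (fun i => (1 - α * lam i) ^ m) * star U := by
    intro m; induction m with
    | zero =>
      simp only [pow_zero]
      have : (Matrix.diagonal (fun _ : Fin n => (1:ℝ)) : Matrix (Fin n) (Fin n) ℝ) = 1 :=
        Matrix.diagonal_one
      simp [this, hUU']
    | succ m ih =>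
      rw [pow_succ, ih, hQdiag]
      simp only [Matrix.mul_assoc, hcan']
      rw [← Matrix.mul_assoc (Matrix.diagonal fun i => (1 - α * lam i) ^ m)
        (Matrix.diagonal fun i => 1 - α * lam i) (star U), Matrix.diagonal_mul_diagonal]
      congr 2
  have hSu : S *ᵥ (mk - θs) = U *ᵥ (Matrix.diagonal (fun i => (1 - α * lam i) ^ k) *ᵥ w) := by
    rw [hmkd, Matrix.mulVec_mulVec, hSPk k, hQpow k]
    have e : U * Matrix.diagonal (fun i => (1 - α * lam i) ^ k) * star U * S
        = (U * Matrix.diagonal (fun i => (1 - α * lam i) ^ k)) * (star U * S) := by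
      simp only [Matrix.mul_assoc]
    rw [e, ← Matrix.mulVec_mulVec, ← hwdef, ← Matrix.mulVec_mulVec]
  have hmean : (H * vecMulVec (mk - θs) (mk - θs)).trace
      = ∑ i, ((1 - α * lam i) ^ k) ^ 2 * (w i * w i) := by
    rw [trace_mul_vecMulVec']
    have hq : (mk - θs) ⬝ᵥ H *ᵥ (mk - θs) = (S *ᵥ (mk - θs)) ⬝ᵥ (S *ᵥ (mk - θs)) := by
      rw [← hSS, ← Matrix.mulVec_mulVec, Matrix.dotProduct_mulVec, hvmS]
    rw [hq, hSu, hnormU]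
    simp only [Matrix.mulVec_diagonal, dotProduct]
    exact Finset.sum_congr rfl fun i _ => by ring
  -- ## assembling E as a sum
  have htrphi : ∀ X : Matrix (Fin n) (Fin n) ℝ,
      (H * Φ^[k] X).trace = ∑ i, (1 - 2 * α * lam i) ^ k * T X i i := by
    intro X
    rw [hT_trace]
    simp only [Matrix.trace, Matrix.diag_apply]
    exact Finset.sum_congr rfl fun i _ => hiter k X i
  have htrV : (H * Vk).trace = (∑ i, Z i i) - (∑ i, (1 - 2 * α * lam i) ^ k * Z i i)
      + ∑ i, (1 - 2 * α * lam i) ^ k * (w i * w i) := by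
    have e0 : (H * Vk).trace = (H * Vinf).trace - (H * Φ^[k] Vinf).trace
        + (H * Φ^[k] (vecMulVec Δ0 Δ0)).trace := by
      show (H * (Vinf - Φ^[k] Vinf + Φ^[k] (vecMulVec Δ0 Δ0))).trace = _
      rw [Matrix.mul_add, Matrix.mul_sub, Matrix.trace_add, Matrix.trace_sub]
    rw [e0, ← htrZ, htrphi Vinf, htrphi (vecMulVec Δ0 Δ0), ← hZdef]
    congr 1
    exact Finset.sum_congr rfl fun i _ => by rw [hvmv i]
  have hEval : E = ∑ i, ((1 - (1 - 2 * α * lam i) ^ k) * (1 / 2 * Z i i)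
      + (1 - 2 * α * lam i) ^ k * (1 / 2 * (w i * w i))
      + ((1 - α * lam i) ^ k) ^ 2 * (1 / 2 * (w i * w i))) := by
    show 1 / 2 * (H * Vk).trace + 1 / 2 * (H * vecMulVec (mk - θs) (mk - θs)).trace = _
    rw [htrV, hmean, mul_add, mul_sub]
    simp only [Finset.mul_sum]
    rw [← Finset.sum_sub_distrib, ← Finset.sum_add_distrib, ← Finset.sum_add_distrib]
    exact Finset.sum_congr rfl fun i _ => by ring
  -- ## scalar facts
  have hαc : α / 4 * (B⁻¹ * Sg).trace = 1 / 2 * ∑ i, Z i i := by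
    have h1 : α * (B⁻¹ * Sg).trace = 2 * ∑ i, Z i i := by rw [htrZ]; linarith [htrHV]
    calc α / 4 * (B⁻¹ * Sg).trace = α * (B⁻¹ * Sg).trace / 4 := by ring
      _ = 2 * (∑ i, Z i i) / 4 := by rw [h1]
      _ = 1 / 2 * ∑ i, Z i i := by ring
  have hh0 : h0 = 1 / 2 * ∑ i, w i * w i := by
    show 1 / 2 * (Δ0 ⬝ᵥ H *ᵥ Δ0) = _
    rw [hw2]
  have hε1 : ε1 = α * ⨆ i, lam i := rfl
  have hε2 : ε2 = α * ⨅ i, lam i := rfl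
  have hne : Nonempty (Fin n) := ⟨⟨0, hn⟩⟩
  have hub : ∀ i, lam i ≤ ⨆ j, lam j := fun i =>
    le_ciSup (Set.Finite.bddAbove (Set.finite_range lam)) i
  have hlb : ∀ i, (⨅ j, lam j) ≤ lam i := fun i =>
    ciInf_le (Set.Finite.bddBelow (Set.finite_range lam)) i
  have hl1pos : 0 < ⨆ j, lam j := lt_of_lt_of_le (hlampos ⟨0, hn⟩) (hub ⟨0, hn⟩)
  have eub : ∀ i, α * lam i ≤ α * ⨆ j, lam j := fun i =>
    mul_le_mul_of_nonneg_left (hub i) hα.le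
  have elb : ∀ i, α * ⨅ j, lam j ≤ α * lam i := fun i =>
    mul_le_mul_of_nonneg_left (hlb i) hα.le
  have hε1pos : 0 < ε1 := by
    have := mul_pos hα hl1pos
    linarith [hε1]
  have h2ε1 : 0 ≤ 1 - 2 * ε1 := by linarith [hlr, hε1]
  have hr0 : 0 ≤ 1 - ε1 := by linarith [hε1pos, h2ε1]
  have hq0 : ∀ i, 0 ≤ 1 - 2 * α * lam i := fun i => by linarith [hε1, eub i, h2ε1]
  have hr0i : ∀ i, 0 ≤ 1 - α * lam i := fun i => by linarith [hε1, eub i, hr0]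
  have pb : ∀ i, (1 - 2 * ε1) ^ k ≤ (1 - 2 * α * lam i) ^ k := fun i =>
    pow_le_pow_left₀ h2ε1 (by linarith [hε1, eub i]) k
  have pq : ∀ i, (1 - 2 * α * lam i) ^ k ≤ (1 - 2 * ε2) ^ k := fun i =>
    pow_le_pow_left₀ (hq0 i) (by linarith [hε2, elb i]) k
  have pc : ∀ i, (1 - ε1) ^ (2 * k) ≤ ((1 - α * lam i) ^ k) ^ 2 := by
    intro i
    rw [pow_mul']
    exact pow_le_pow_left₀ (pow_nonneg hr0 k)
      (pow_le_pow_left₀ hr0 (by linarith [hε1, eub i]) k) 2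
  have pc' : ∀ i, ((1 - α * lam i) ^ k) ^ 2 ≤ (1 - ε2) ^ (2 * k) := by
    intro i
    rw [pow_mul']
    exact pow_le_pow_left₀ (pow_nonneg (hr0i i) k)
      (pow_le_pow_left₀ (hr0i i) (by linarith [hε2, elb i]) k) 2
  constructor
  · -- lower bound
    rw [hEval]
    have lhs_eq : (1 - (1 - 2 * ε2) ^ k) * (α / 4) * (B⁻¹ * Sg).trace
          + (1 - 2 * ε1) ^ k * h0 + (1 - ε1) ^ (2 * k) * h0
        = ∑ i, ((1 - (1 - 2 * ε2) ^ k) * (1 / 2 * Z i i)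
          + (1 - 2 * ε1) ^ k * (1 / 2 * (w i * w i))
          + (1 - ε1) ^ (2 * k) * (1 / 2 * (w i * w i))) := by
      rw [mul_assoc (1 - (1 - 2 * ε2) ^ k) (α / 4) ((B⁻¹ * Sg).trace), hαc, hh0]
      simp only [Finset.mul_sum]
      rw [← Finset.sum_add_distrib, ← Finset.sum_add_distrib]
    rw [lhs_eq]
    apply Finset.sum_le_sum
    intro i _
    have hZi : 0 ≤ 1 / 2 * Z i i := by linarith [hZdiag i]
    have hwi : 0 ≤ 1 / 2 * (w i * w i) := mul_nonneg (by norm_num) (mul_self_nonneg (w i))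
    have t1 : (1 - (1 - 2 * ε2) ^ k) * (1 / 2 * Z i i)
        ≤ (1 - (1 - 2 * α * lam i) ^ k) * (1 / 2 * Z i i) :=
      mul_le_mul_of_nonneg_right (by linarith [pq i]) hZi
    have t2 := mul_le_mul_of_nonneg_right (pb i) hwi
    have t3 := mul_le_mul_of_nonneg_right (pc i) hwi
    linarith
  · -- upper bound
    rw [hEval]
    have rhs_eq : (1 - (1 - 2 * ε1) ^ k) * (α / 4) * (B⁻¹ * Sg).trace
          + (1 - 2 * ε2) ^ k * h0 + (1 - ε2) ^ (2 * k) * h0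
        = ∑ i, ((1 - (1 - 2 * ε1) ^ k) * (1 / 2 * Z i i)
          + (1 - 2 * ε2) ^ k * (1 / 2 * (w i * w i))
          + (1 - ε2) ^ (2 * k) * (1 / 2 * (w i * w i))) := by
      rw [mul_assoc (1 - (1 - 2 * ε1) ^ k) (α / 4) ((B⁻¹ * Sg).trace), hαc, hh0]
      simp only [Finset.mul_sum]
      rw [← Finset.sum_add_distrib, ← Finset.sum_add_distrib]
    rw [rhs_eq]
    apply Finset.sum_le_sum
    intro i _
    have hZi : 0 ≤ 1 / 2 * Z i i := by linarith [hZdiag i]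
    have hwi : 0 ≤ 1 / 2 * (w i * w i) := mul_nonneg (by norm_num) (mul_self_nonneg (w i))
    have t1 : (1 - (1 - 2 * α * lam i) ^ k) * (1 / 2 * Z i i)
        ≤ (1 - (1 - 2 * ε1) ^ k) * (1 / 2 * Z i i) :=
      mul_le_mul_of_nonneg_right (by linarith [pb i]) hZi
    have t2 := mul_le_mul_of_nonneg_right (pq i) hwi
    have t3 := mul_le_mul_of_nonneg_right (pc' i) hwi
    linarith
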